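/- Let w be a word, 𝒫 a Parikh vector, e a position of w and t an integer with 0 ≤ t < |𝒫|. Then there is at most one left-maximal occurrence with abelian period 𝒫 ending at position e with tail length t: if (b₁,h₁,t,e) and (b₂,h₂,t,e) are both left-maximal occurrences with abelian period 𝒫 in w, then b₁ = b₂ and h₁ = h₂. (Consequently, at most |𝒫| left-maximal occurrences with abelian period 𝒫 end at any given position, one per tail length.) -/

import Mathlib

/-- The Parikh vector of a word `v`: the number of occurrences of each letter. -/
def parikh {α : Type*} [DecidableEq α] (v : List α) : α → ℕ := fun a => v.count a

/-- The norm of a Parikh vector: the sum of its components. -/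
def pnorm {α : Type*} [Fintype α] (P : α → ℕ) : ℕ := ∑ a, P a

/-- Non-strict containment of Parikh vectors: `P ⊆ Q`. -/
def PLe {α : Type*} (P Q : α → ℕ) : Prop := ∀ a, P a ≤ Q a

/-- Strict containment of Parikh vectors: `P ⊂ Q`, i.e. componentwise `≤` and smaller norm. -/
def PLt {α : Type*} [Fintype α] (P Q : α → ℕ) : Prop :=
  (∀ a, P a ≤ Q a) ∧ pnorm P < pnorm Q

/-- The substring `w[i..j]` of `w`, from position `i` to position `j`, both included. -/
def substr {α : Type*} (w : List α) (i j : ℕ) : List α := (w.drop i).take (j + 1 - i)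

/-- `(b,h,t,e)` is an occurrence of a substring of `w` with abelian period `P`:
`w[b..e] = u₀u₁⋯u_{k-1}u_k` for some `k ≥ 2`, with `|u₀| = h`, `|u_k| = t`,
`𝒫_{u_1} = ⋯ = 𝒫_{u_{k-1}} = P`, `𝒫_{u₀} ⊂ P` and `𝒫_{u_k} ⊂ P`. -/
def IsOcc {α : Type*} [Fintype α] [DecidableEq α]
    (w : List α) (P : α → ℕ) (b h t e : ℕ) : Prop :=
  b ≤ e ∧ e < w.length ∧
  ∃ (u0 uk : List α) (us : List (List α)),
    substr w b e = u0 ++ us.flatten ++ uk ∧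
    u0.length = h ∧ uk.length = t ∧
    1 ≤ us.length ∧
    (∀ u ∈ us, parikh u = P) ∧
    PLt (parikh u0) P ∧ PLt (parikh uk) P

/-- An occurrence `(b,h,t,e)` with abelian period `P` is left-maximal if there is no
occurrence `(b-1,h',t',e)` with the same abelian period `P`. -/
def LeftMaximal {α : Type*} [Fintype α] [DecidableEq α]
    (w : List α) (P : α → ℕ) (b h t e : ℕ) : Prop :=
  IsOcc w P b h t e ∧ ∀ b' h' t', b' + 1 = b → ¬ IsOcc w P b' h' t' e

/-- An occurrence `(b,h,t,e)` with abelian period `P` is right-maximal if there is no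
occurrence `(b,h',t',e+1)` with the same abelian period `P`. -/
def RightMaximal {α : Type*} [Fintype α] [DecidableEq α]
    (w : List α) (P : α → ℕ) (b h t e : ℕ) : Prop :=
  IsOcc w P b h t e ∧ ∀ h' t', ¬ IsOcc w P b h' t' (e + 1)

/-- An abelian run of period `P` is a maximal occurrence `(b,h,t,e)` with abelian period `P`
such that `e - b - h - t + 1 ≥ 2|P|`. -/
def IsAbelianRun {α : Type*} [Fintype α] [DecidableEq α]
    (w : List α) (P : α → ℕ) (b h t e : ℕ) : Prop :=
  LeftMaximal w P b h t e ∧ RightMaximal w P b h t e ∧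
  b + h + t + 2 * pnorm P ≤ e + 1

lemma pnorm_parikh {α : Type*} [Fintype α] [DecidableEq α] (v : List α) :
    pnorm (parikh v) = v.length := by
  induction v with
  | nil => simp [pnorm, parikh]
  | cons x xs ih =>
    simp only [pnorm, parikh, List.count_cons] at *
    rw [Finset.sum_add_distrib, ih]
    simp [List.length_cons]

lemma flatten_len {α : Type*} [Fintype α] [DecidableEq α] {us : List (List α)} {P : α → ℕ}
    (h : ∀ u ∈ us, parikh u = P) : us.flatten.length = us.length * pnorm P := by
  induction us with
  | nil => simp
  | cons u rest ih =>
    simp only [List.flatten_cons, List.length_append, List.length_cons]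
    rw [ih (fun v hv => h v (List.mem_cons_of_mem _ hv)),
        ← pnorm_parikh u, h u List.mem_cons_self]
    ring

lemma substr_len {α : Type*} {w : List α} {b e : ℕ} (hbe : b ≤ e) (he : e < w.length) :
    (substr w b e).length = e + 1 - b := by
  simp [substr]
  omega

lemma substr_succ {α : Type*} {w : List α} {b e : ℕ} (hbe : b ≤ e) :
    substr w (b+1) e = (substr w b e).drop 1 := by
  simp only [substr, List.drop_take, List.drop_drop]
  congr 1 <;> omega

lemma shift_one {α : Type*} [Fintype α] [DecidableEq α]
    {w : List α} {P : α → ℕ} {b h t e : ℕ} (hp : 0 < pnorm P)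
    (hocc : IsOcc w P b h t e) (hle : b + 1 + pnorm P + t ≤ e + 1) :
    ∃ h', IsOcc w P (b+1) h' t e := by
  obtain ⟨hbe, he, u0, uk, us, hsub, hh, htk, hus, hPus, hu0, huk⟩ := hocc
  have hb1e : b + 1 ≤ e := by omega
  have hsub' : substr w (b+1) e = (u0 ++ us.flatten ++ uk).drop 1 := by
    rw [substr_succ hbe, hsub]
  match u0, hh with
  | x :: u0', hh =>
    refine ⟨h - 1, hb1e, he, u0', uk, us, ?_, ?_, htk, hus, hPus, ?_, huk⟩
    · simpa using hsub'
    · simp only [List.length_cons] at hh; omega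
    · constructor
      · intro a
        refine le_trans ?_ (hu0.1 a)
        simp [parikh, List.count_cons]
      · rw [pnorm_parikh] at *
        have := hu0.2
        rw [pnorm_parikh] at this
        simp at this ⊢
        omega
  | [], hh =>
    match us, hus with
    | u1 :: rest, _ =>
      have hu1P : parikh u1 = P := hPus u1 List.mem_cons_self
      have hu1len : u1.length = pnorm P := by rw [← pnorm_parikh u1, hu1P]
      -- rest nonempty
      have hlen : (substr w b e).length = e + 1 - b := substr_len hbe he
      rw [hsub] at hlen
      simp only [List.nil_append, List.length_append, flatten_len hPus, List.length_cons] at hlen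
      have hrest : 1 ≤ rest.length := by
        by_contra hc
        push_neg at hc
        interval_cases hr : rest.length <;> omega
      have hpz := hp
      match u1, hu1len with
      | [], hu1len => simp at hu1len; omega
      | y :: u1', hu1len =>
        refine ⟨u1'.length, hb1e, he, u1', uk, rest, ?_, rfl, htk, hrest, ?_, ?_, huk⟩
        · simp only [List.nil_append, List.flatten_cons, List.cons_append] at hsub' ⊢
          simpa using hsub'
        · exact fun v hv => hPus v (List.mem_cons_of_mem _ hv)
        · constructor
          · intro a
            rw [← hu1P]
            simp [parikh, List.count_cons]
          · rw [pnorm_parikh]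
            simp at hu1len
            omega

lemma shift {α : Type*} [Fintype α] [DecidableEq α]
    {w : List α} {P : α → ℕ} {b h t e : ℕ} (hp : 0 < pnorm P)
    (hocc : IsOcc w P b h t e) :
    ∀ b', b ≤ b' → b' + pnorm P + t ≤ e + 1 → ∃ h', IsOcc w P b' h' t e := by
  intro b' hb
  induction b' , hb using Nat.le_induction with
  | base => exact fun _ => ⟨h, hocc⟩
  | succ n hn ih =>
    intro hcond
    obtain ⟨h', hocc'⟩ := ih (by omega)
    exact shift_one hp hocc' (by omega)

lemma occ_facts {α : Type*} [Fintype α] [DecidableEq α]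
    {w : List α} {P : α → ℕ} {b h t e : ℕ}
    (hocc : IsOcc w P b h t e) :
    h < pnorm P ∧ ∃ K, 1 ≤ K ∧ e + 1 - b = h + K * pnorm P + t := by
  obtain ⟨hbe, he, u0, uk, us, hsub, hh, htk, hus, hPus, hu0, huk⟩ := hocc
  have hlen : (substr w b e).length = e + 1 - b := substr_len hbe he
  rw [hsub] at hlen
  simp only [List.length_append, flatten_len hPus] at hlen
  have h0 : h < pnorm P := by
    have := hu0.2; rw [pnorm_parikh, hh] at this; exact this
  exact ⟨h0, us.length, hus, by omega⟩

theorem leftMaximal_unique' {α : Type*} [Fintype α] [DecidableEq α]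
    (w : List α) (P : α → ℕ) (e t b₁ h₁ b₂ h₂ : ℕ)
    (ht : t < pnorm P)
    (hm₁ : (IsOcc w P b₁ h₁ t e ∧ ∀ b' h' t', b' + 1 = b₁ → ¬ IsOcc w P b' h' t' e))
    (hm₂ : (IsOcc w P b₂ h₂ t e ∧ ∀ b' h' t', b' + 1 = b₂ → ¬ IsOcc w P b' h' t' e)) :
    b₁ = b₂ ∧ h₁ = h₂ := by
  have hp : 0 < pnorm P := by omega
  obtain ⟨ho₁, hmax₁⟩ := hm₁
  obtain ⟨ho₂, hmax₂⟩ := hm₂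
  obtain ⟨hh₁, K₁, hK₁, hlen₁⟩ := occ_facts ho₁
  obtain ⟨hh₂, K₂, hK₂, hlen₂⟩ := occ_facts ho₂
  have hmul₁ : pnorm P ≤ K₁ * pnorm P := Nat.le_mul_of_pos_left _ hK₁
  have hmul₂ : pnorm P ≤ K₂ * pnorm P := Nat.le_mul_of_pos_left _ hK₂
  have hbe₁ := ho₁.1
  have hbe₂ := ho₂.1
  have hb : b₁ = b₂ := by
    rcases Nat.lt_trichotomy b₁ b₂ with hlt | heq | hgt
    · exfalso
      have hcond : (b₂ - 1) + pnorm P + t ≤ e + 1 := by omega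
      obtain ⟨h', hocc'⟩ := shift hp ho₁ (b₂ - 1) (by omega) hcond
      exact hmax₂ (b₂ - 1) h' t (by omega) hocc'
    · exact heq
    · exfalso
      have hcond : (b₁ - 1) + pnorm P + t ≤ e + 1 := by omega
      obtain ⟨h', hocc'⟩ := shift hp ho₂ (b₁ - 1) (by omega) hcond
      exact hmax₁ (b₁ - 1) h' t (by omega) hocc'
  subst hb
  refine ⟨rfl, ?_⟩
  have hkey : h₁ + K₁ * pnorm P = h₂ + K₂ * pnorm P := by omega
  have := congrArg (· % pnorm P) hkey
  simpa [Nat.add_mul_mod_self_right, Nat.mod_eq_of_lt hh₁, Nat.mod_eq_of_lt hh₂] using this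

/-- At most one left-maximal occurrence with abelian period `P` ends at position `e` with a
given tail length `t < |P|`. -/
theorem leftMaximal_unique {α : Type*} [Fintype α] [DecidableEq α]
    (w : List α) (P : α → ℕ) (e t b₁ h₁ b₂ h₂ : ℕ)
    (ht : t < pnorm P)
    (hm₁ : LeftMaximal w P b₁ h₁ t e) (hm₂ : LeftMaximal w P b₂ h₂ t e) :
    b₁ = b₂ ∧ h₁ = h₂ :=
  leftMaximal_unique' w P e t b₁ h₁ b₂ h₂ ht hm₁ hm₂
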